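/- Let η : G → G' be a surjective group homomorphism, S a subset of G on which η is injective, and H' a subgroup of G' such that η(S) is a right transversal of H' in G'. Then S is a right transversal of the subgroup η⁻¹(H') in G, and the induced operations correspond under η: for all x, y ∈ S, η(x ∘_S y) = η(x) ∘' η(y), where ∘_S is the operation induced on S as a transversal of η⁻¹(H') and ∘' is the operation induced on η(S) as a transversal of H'. -/

import Mathlib

/-- `S` is a right transversal of the subgroup `H` in `G`: every element of `G`
can be written uniquely as `h * s` with `h ∈ H` and `s ∈ S`. -/
def IsRightTransversal {G : Type*} [Group G] (H : Subgroup G) (S : Set G) : Prop :=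
  ∀ g : G, ∃! p : H × S, g = (p.1 : G) * (p.2 : G)

/-- If `η : G → G'` is a surjective homomorphism injective on `S ⊆ G`, and `η(S)` is a
right transversal of `H'` in `G'`, then `S` is a right transversal of `η⁻¹(H')` in `G`,
and the induced operations correspond under `η`. -/
theorem transversal_pullback {G G' : Type*} [Group G] [Group G'] (η : G →* G')
    (hsurj : Function.Surjective η) (S : Set G) (hinj : Set.InjOn η S)
    (H' : Subgroup G') (hT : IsRightTransversal H' (η '' S)) :
    IsRightTransversal (H'.comap η) S ∧
      ∀ x ∈ S, ∀ y ∈ S, ∀ z ∈ S, ∀ z' ∈ η '' S,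
        (∃ h ∈ H'.comap η, x * y = h * z) → (∃ h' ∈ H', η x * η y = h' * z') →
          η z = z' := by
  constructor
  · intro g
    obtain ⟨⟨h', t⟩, heq, huniq⟩ := hT (η g)
    obtain ⟨s, hsS, hst⟩ := t.2
    refine ⟨⟨⟨g * s⁻¹, ?_⟩, ⟨s, hsS⟩⟩, by simp, ?_⟩
    · show η (g * s⁻¹) ∈ H'
      have : η (g * s⁻¹) = η g * (η s)⁻¹ := by simp
      rw [this, hst, heq]
      simp [h'.2]
    · rintro ⟨⟨h1, hh1⟩, ⟨s1, hs1⟩⟩ hgeq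
      simp only at hgeq
      have hdec : η g = (⟨η h1, hh1⟩ : H') * (⟨η s1, ⟨s1, hs1, rfl⟩⟩ : (η '' S : Set G')) := by
        simp [hgeq]
      have := huniq (⟨⟨η h1, hh1⟩, ⟨η s1, ⟨s1, hs1, rfl⟩⟩⟩ : H' × (η '' S : Set G')) hdec
      have hts : (η s1 : G') = (t : G') := congrArg (fun p => ((p.2 : (η '' S : Set G')) : G')) this
      have hs : s1 = s := hinj hs1 hsS (by rw [hts, hst])
      have hh : h1 = g * s⁻¹ := by
        rw [← hs]; simp [hgeq]
      ext <;> simp [hs, hh]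
  · rintro x hx y hy z hz z' hz' ⟨h, hh, hxy⟩ ⟨h', hh', hxy'⟩
    obtain ⟨⟨k, t⟩, heq, huniq⟩ := hT (η x * η y)
    have d1 : η x * η y = (⟨η h, hh⟩ : H') * (⟨η z, ⟨z, hz, rfl⟩⟩ : (η '' S : Set G')) := by
      simp [← map_mul, hxy]
    have d2 : η x * η y = (⟨h', hh'⟩ : H') * (⟨z', hz'⟩ : (η '' S : Set G')) := by
      simp [hxy']
    have e1 := huniq (⟨⟨η h, hh⟩, ⟨η z, ⟨z, hz, rfl⟩⟩⟩ : H' × (η '' S : Set G')) d1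
    have e2 := huniq (⟨⟨h', hh'⟩, ⟨z', hz'⟩⟩ : H' × (η '' S : Set G')) d2
    have : ((⟨η z, ⟨z, hz, rfl⟩⟩ : (η '' S : Set G')) : G') = ((⟨z', hz'⟩ : (η '' S : Set G')) : G') := by
      rw [congrArg (fun p => ((p.2 : (η '' S : Set G')) : G')) e1,
          congrArg (fun p => ((p.2 : (η '' S : Set G')) : G')) e2]
    simpa using this
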